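/- An n-gon with n ≥ 3 is quasi-strictly convex if and only if it is strictly to-one-side, i.e., strictly to one side of every one of its edges. -/

import Mathlib

/-- Determinant of the 3×3 matrix with rows (1,x_P,y_P), (1,x_Q,y_Q), (1,x_R,y_R). -/
def det3 (P Q R : ℝ × ℝ) : ℝ :=
  Matrix.det !![1, P.1, P.2; 1, Q.1, Q.2; 1, R.1, R.2]

/-- Dot product on ℝ². -/
def dot2 (a b : ℝ × ℝ) : ℝ := a.1 * b.1 + a.2 * b.2

/-- The points of `S` lie strictly to one side of the segment `[P,Q]`:
there is a line through `P` and `Q` (with normal `nv`) such that all of `S`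
lies in one of the open half-planes it bounds. -/
def StrictSide (P Q : ℝ × ℝ) (S : Set (ℝ × ℝ)) : Prop :=
  ∃ nv : ℝ × ℝ, nv ≠ 0 ∧ dot2 nv (Q - P) = 0 ∧ ∀ A ∈ S, 0 < dot2 nv (A - P)

/-- The points of `S` lie (non-strictly) to one side of the segment `[P,Q]`:
there is a line containing `[P,Q]` bounding a closed half-plane containing `S`. -/
def WeakSide (P Q : ℝ × ℝ) (S : Set (ℝ × ℝ)) : Prop :=
  ∃ nv : ℝ × ℝ, nv ≠ 0 ∧ dot2 nv (Q - P) = 0 ∧ ∀ A ∈ S, 0 ≤ dot2 nv (A - P)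

/-- The successor index modulo `n`. -/
def nxt {n : ℕ} (i : Fin n) : Fin n :=
  ⟨(i.val + 1) % n, Nat.mod_lt _ (Nat.zero_lt_of_lt i.isLt)⟩

/-- The polygon `(V 0, …, V (n-1))` is convex: the union of its edges equals
the boundary of the convex hull of its vertex set. -/
def IsConvexPolygon {n : ℕ} (V : Fin n → ℝ × ℝ) : Prop :=
  (⋃ i : Fin n, segment ℝ (V i) (V (nxt i))) = frontier (convexHull ℝ (Set.range V))

/-- Quasi-strict: no two adjacent vertices are collinear with any other vertex. -/
def QuasiStrict {n : ℕ} (V : Fin n → ℝ × ℝ) : Prop :=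
  ∀ i j : Fin n, j ≠ i → j ≠ nxt i → ¬ Collinear ℝ ({V i, V (nxt i), V j} : Set (ℝ × ℝ))

/-- Strict: no three vertices with distinct indices are collinear. -/
def StrictPoly {n : ℕ} (V : Fin n → ℝ × ℝ) : Prop :=
  ∀ i j k : Fin n, i ≠ j → i ≠ k → j ≠ k → ¬ Collinear ℝ ({V i, V j, V k} : Set (ℝ × ℝ))

/-- The vertices other than the endpoints of edge `i`. -/
def OtherVerts {n : ℕ} (V : Fin n → ℝ × ℝ) (i : Fin n) : Set (ℝ × ℝ) :=
  {P | ∃ j : Fin n, j ≠ i ∧ j ≠ nxt i ∧ P = V j}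

/-- The polygon is strictly to one side of each of its edges. -/
def StrictlyToOneSide {n : ℕ} (V : Fin n → ℝ × ℝ) : Prop :=
  ∀ i : Fin n, StrictSide (V i) (V (nxt i)) (OtherVerts V i)

/-- The polygon is (non-strictly) to one side of each of its edges. -/
def ToOneSide {n : ℕ} (V : Fin n → ℝ × ℝ) : Prop :=
  ∀ i : Fin n, WeakSide (V i) (V (nxt i)) (OtherVerts V i)

lemma det3_eq (P Q R : ℝ × ℝ) :
    det3 P Q R = (Q.1-P.1)*(R.2-P.2) - (Q.2-P.2)*(R.1-P.1) := by
  simp [det3, Matrix.det_fin_three, Matrix.vecHead, Matrix.vecTail]; ring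
lemma det3_cyc (P Q R : ℝ × ℝ) : det3 Q R P = det3 P Q R := by
  simp [det3_eq]; ring
lemma det3_swap12 (P Q R : ℝ × ℝ) : det3 Q P R = - det3 P Q R := by
  simp [det3_eq]; ring
lemma det3_self_left (P Q : ℝ × ℝ) : det3 P Q P = 0 := by simp [det3_eq]
lemma det3_self_right (P Q : ℝ × ℝ) : det3 P Q Q = 0 := by simp [det3_eq]; ring_nf
lemma cramer_sum (A B C y : ℝ × ℝ) :
    det3 y B C + det3 A y C + det3 A B y = det3 A B C := by
  simp [det3_eq]; ring
lemma cramer_vec (A B C y : ℝ × ℝ) :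
    (det3 A B C) • y = (det3 y B C) • A + (det3 A y C) • B + (det3 A B y) • C := by
  apply Prod.ext <;> simp [det3_eq, Prod.smul_def] <;> ring
def rot (g : ℝ × ℝ) : ℝ × ℝ := (-g.2, g.1)
lemma rot_ne_zero {g : ℝ × ℝ} (hg : g ≠ 0) : rot g ≠ 0 := by
  simp [rot, Prod.ext_iff] at *; tauto
lemma det3_dot (P Q A : ℝ × ℝ) : det3 P Q A = dot2 (rot (Q - P)) (A - P) := by
  simp [det3_eq, dot2, rot]; ring
lemma perp_rep {g w : ℝ × ℝ} (hg : g ≠ 0) (h : dot2 g w = 0) :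
    ∃ t : ℝ, w = t • rot g := by
  have hg' : g.1 ≠ 0 ∨ g.2 ≠ 0 := by
    by_contra hc; push_neg at hc; exact hg (Prod.ext hc.1 hc.2)
  have hD : g.1^2 + g.2^2 ≠ 0 := by
    rcases hg' with h1 | h1 <;> positivity
  have h' : g.1 * w.1 + g.2 * w.2 = 0 := h
  refine ⟨(dot2 (rot g) w) / (g.1^2 + g.2^2), ?_⟩
  apply Prod.ext <;> simp [rot, dot2] <;> field_simp <;>
    first
      | linear_combination g.1 * h'
      | linear_combination g.2 * h'
lemma dot2_comm (a b : ℝ × ℝ) : dot2 a b = dot2 b a := by simp [dot2]; ring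
lemma dot2_rot_self (g : ℝ × ℝ) : dot2 (rot g) (rot g) = g.1^2 + g.2^2 := by
  simp [dot2, rot]; ring
lemma dot2_smul (t : ℝ) (a b : ℝ × ℝ) : dot2 (t • a) b = t * dot2 a b := by
  simp [dot2]; ring
def dotL (g : ℝ × ℝ) : (ℝ × ℝ) →ₗ[ℝ] ℝ where
  toFun p := dot2 g p
  map_add' x y := by simp [dot2]; ring
  map_smul' t x := by simp [dot2]; ring
lemma det3_affine_comb {ι : Type*} (t : Finset ι) (w : ι → ℝ) (z : ι → ℝ × ℝ)
    (hw : ∑ j ∈ t, w j = 1) (P Q : ℝ × ℝ) :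
    det3 P Q (∑ j ∈ t, w j • z j) = ∑ j ∈ t, w j * det3 P Q (z j) := by
  have hx : ∀ A, det3 P Q A = dotL (rot (Q-P)) A - dot2 (rot (Q-P)) P := by
    intro A; rw [det3_dot]; simp [dotL, dot2]; ring
  rw [hx, map_sum]
  simp only [hx, map_smul, smul_eq_mul, mul_sub, Finset.sum_sub_distrib, ← Finset.sum_mul, hw]
  ring
lemma det3_continuous (P Q : ℝ × ℝ) : Continuous (fun y => det3 P Q y) := by
  simp only [det3_eq]; fun_prop
lemma det3_combo2 {a b : ℝ} (hab : a + b = 1) (P Q x y : ℝ × ℝ) :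
    det3 P Q (a • x + b • y) = a * det3 P Q x + b * det3 P Q y := by
  simp only [det3_eq, Prod.fst_add, Prod.snd_add, Prod.smul_fst, Prod.smul_snd, smul_eq_mul]
  linear_combination ((Q.1-P.1)*P.2 - (Q.2-P.2)*P.1) * hab

lemma nxt_val {n : ℕ} (i : Fin n) : (nxt i).val = (i.val + 1) % n := rfl

lemma nxt_ne {n : ℕ} (hn : 2 ≤ n) (i : Fin n) : nxt i ≠ i := by
  intro h
  have h' : (i.val + 1) % n = i.val := congrArg Fin.val h
  rcases lt_or_ge (i.val + 1) n with h1 | h1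
  · rw [Nat.mod_eq_of_lt h1] at h'; omega
  · have h2 : i.val + 1 = n := by have := i.isLt; omega
    rw [h2, Nat.mod_self] at h'; omega

lemma nxt_nxt_ne {n : ℕ} (hn : 3 ≤ n) (i : Fin n) : nxt (nxt i) ≠ i := by
  intro h
  have h' : ((i.val + 1) % n + 1) % n = i.val := congrArg Fin.val h
  have hi := i.isLt
  rcases lt_or_ge (i.val + 1) n with h2 | h2
  · have e1 : (i.val + 1) % n = i.val + 1 := Nat.mod_eq_of_lt h2
    rw [e1] at h'
    rcases lt_or_ge (i.val + 2) n with h1 | h1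
    · have e2 : (i.val + 1 + 1) % n = i.val + 1 + 1 := Nat.mod_eq_of_lt (by omega)
      rw [e2] at h'; omega
    · have h3 : i.val + 1 + 1 = n := by omega
      rw [h3, Nat.mod_self] at h'; omega
  · have h3 : i.val + 1 = n := by omega
    rw [h3, Nat.mod_self] at h'
    have e2 : (0 + 1) % n = 1 := Nat.mod_eq_of_lt (by omega)
    rw [e2] at h'; omega

lemma adj_ne {n : ℕ} (hn : 3 ≤ n) {V : Fin n → ℝ × ℝ} (hS : StrictlyToOneSide V)
    (i : Fin n) : V i ≠ V (nxt i) := by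
  intro h
  obtain ⟨nv, hnv, hperp, hpos⟩ := hS (nxt i)
  have hmem : V i ∈ OtherVerts V (nxt i) :=
    ⟨i, Ne.symm (nxt_ne (by omega) i), Ne.symm (nxt_nxt_ne hn i), rfl⟩
  have := hpos _ hmem
  rw [h, sub_self] at this
  simp [dot2] at this

/-- extraction of a global orientation sign. -/
lemma exists_sign {n : ℕ} (hn : 3 ≤ n) {V : Fin n → ℝ × ℝ} (hS : StrictlyToOneSide V) :
    ∃ s : ℝ, s ≠ 0 ∧
      ∀ i j : Fin n, j ≠ i → j ≠ nxt i → 0 < s * det3 (V i) (V (nxt i)) (V j) := by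
  -- local signs
  have hloc : ∀ i : Fin n, ∃ t : ℝ, t ≠ 0 ∧
      ∀ j : Fin n, j ≠ i → j ≠ nxt i → 0 < t * det3 (V i) (V (nxt i)) (V j) := by
    intro i
    obtain ⟨nv, hnv, hperp, hpos⟩ := hS i
    have hd : V (nxt i) - V i ≠ 0 := sub_ne_zero.2 (Ne.symm (adj_ne hn hS i))
    obtain ⟨t, ht⟩ := perp_rep hd (by rw [dot2_comm]; exact hperp)
    have ht0 : t ≠ 0 := by
      intro h0; rw [h0, zero_smul] at ht; exact hnv ht
    refine ⟨t, ht0, fun j hj1 hj2 => ?_⟩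
    have := hpos (V j) ⟨j, hj1, hj2, rfl⟩
    rw [ht, dot2_smul] at this
    rwa [det3_dot]
  choose t ht0 htpos using hloc
  -- adjacent signs agree
  have hchain : ∀ i : Fin n, 0 < t i * t (nxt i) := by
    intro i
    have h1 : 0 < t i * det3 (V i) (V (nxt i)) (V (nxt (nxt i))) :=
      htpos i (nxt (nxt i)) (nxt_nxt_ne hn i) (nxt_ne (by omega) (nxt i))
    have h2 : 0 < t (nxt i) * det3 (V (nxt i)) (V (nxt (nxt i))) (V i) :=
      htpos (nxt i) i (Ne.symm (nxt_ne (by omega) i)) (Ne.symm (nxt_nxt_ne hn i))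
    rw [det3_cyc] at h2
    nlinarith [mul_pos h1 h2, sq_nonneg (det3 (V i) (V (nxt i)) (V (nxt (nxt i))))]
  -- all signs agree with t 0
  have h0n : (0 : ℕ) < n := by omega
  have hglob : ∀ k : ℕ, ∀ hk : k < n, 0 < t ⟨0, h0n⟩ * t ⟨k, hk⟩ := by
    intro k
    induction k with
    | zero =>
      intro hk
      have h := ht0 ⟨0, h0n⟩
      have : (⟨0, hk⟩ : Fin n) = ⟨0, h0n⟩ := rfl
      rw [this]
      exact mul_self_pos.2 h
    | succ m ih =>
      intro hk
      have hm : m < n := by omega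
      have hstep := hchain ⟨m, hm⟩
      have hnxt : nxt ⟨m, hm⟩ = ⟨m + 1, hk⟩ := by
        apply Fin.ext; simp [nxt_val, Nat.mod_eq_of_lt hk]
      rw [hnxt] at hstep
      have := ih hm
      nlinarith [mul_pos this hstep, sq_nonneg (t ⟨m, hm⟩)]
  refine ⟨t ⟨0, h0n⟩, ht0 _, fun i j hj1 hj2 => ?_⟩
  have h1 := htpos i j hj1 hj2
  have h2 : 0 < t ⟨0, h0n⟩ * t i := by
    have := hglob i.val i.isLt
    simpa using this
  nlinarith [mul_pos h2 h1, sq_nonneg (t i)]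

lemma det3_swap23 (P Q R : ℝ × ℝ) : det3 P R Q = - det3 P Q R := by
  simp [det3_eq]; ring

section Core
variable {n : ℕ} {V : Fin n → ℝ × ℝ} {s : ℝ}

lemma halfspace_convex (s : ℝ) (P Q : ℝ × ℝ) :
    Convex ℝ {x : ℝ × ℝ | 0 ≤ s * det3 P Q x} := by
  intro x hx y hy a b ha hb hab
  simp only [Set.mem_setOf_eq] at *
  rw [det3_combo2 hab]
  nlinarith

lemma hull_subset_halfspace
    (Hpos : ∀ i j : Fin n, j ≠ i → j ≠ nxt i → 0 < s * det3 (V i) (V (nxt i)) (V j))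
    (i : Fin n) :
    convexHull ℝ (Set.range V) ⊆ {x : ℝ × ℝ | 0 ≤ s * det3 (V i) (V (nxt i)) x} := by
  apply convexHull_min _ (halfspace_convex s _ _)
  rintro _ ⟨j, rfl⟩
  simp only [Set.mem_setOf_eq]
  by_cases hj1 : j = i
  · rw [hj1, det3_self_left]; simp
  · by_cases hj2 : j = nxt i
    · rw [hj2, det3_self_right]; simp
    · exact (Hpos i j hj1 hj2).le

lemma face_eq_segment (hn : 3 ≤ n)
    (Hpos : ∀ i j : Fin n, j ≠ i → j ≠ nxt i → 0 < s * det3 (V i) (V (nxt i)) (V j))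
    (i : Fin n) {x : ℝ × ℝ} (hx : x ∈ convexHull ℝ (Set.range V))
    (h0 : s * det3 (V i) (V (nxt i)) x = 0) :
    x ∈ segment ℝ (V i) (V (nxt i)) := by
  rw [convexHull_range_eq_exists_affineCombination] at hx
  obtain ⟨ts, w, hw0, hw1, hxx⟩ := hx
  rw [Finset.affineCombination_eq_linear_combination _ _ _ hw1] at hxx
  -- the sum of nonnegative terms is zero
  have hsum : ∑ j ∈ ts, w j * (s * det3 (V i) (V (nxt i)) (V j)) = 0 := by
    have := det3_affine_comb ts w V hw1 (V i) (V (nxt i))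
    rw [hxx] at this
    calc ∑ j ∈ ts, w j * (s * det3 (V i) (V (nxt i)) (V j))
        = s * ∑ j ∈ ts, w j * det3 (V i) (V (nxt i)) (V j) := by
          rw [Finset.mul_sum]; congr 1; ext j; ring
      _ = s * det3 (V i) (V (nxt i)) x := by rw [← this]
      _ = 0 := h0
  have hterm : ∀ j ∈ ts, w j * (s * det3 (V i) (V (nxt i)) (V j)) = 0 := by
    refine (Finset.sum_eq_zero_iff_of_nonneg ?_).1 hsum
    intro j _
    by_cases hj1 : j = i
    · rw [hj1, det3_self_left]; simp
    · by_cases hj2 : j = nxt i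
      · rw [hj2, det3_self_right]; simp
      · exact mul_nonneg (hw0 j ‹_›) (Hpos i j hj1 hj2).le
  -- weights vanish off {i, nxt i}
  set w' : Fin n → ℝ := fun j => if j ∈ ts then w j else 0 with hw'
  have hw'zero : ∀ j : Fin n, j ≠ i → j ≠ nxt i → w' j = 0 := by
    intro j hj1 hj2
    by_cases hjt : j ∈ ts
    · have := hterm j hjt
      rcases mul_eq_zero.1 this with h | h
      · simp [hw', hjt, h]
      · exact absurd h (ne_of_gt (Hpos i j hj1 hj2))
    · simp [hw', hjt]
  have hine : i ≠ nxt i := (Ne.symm (nxt_ne (by omega) i))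
  have hpair : ({i, nxt i} : Finset (Fin n)) ⊆ Finset.univ := Finset.subset_univ _
  -- sums over the pair
  have hsum1 : w' i + w' (nxt i) = 1 := by
    have e1 : ∑ j ∈ ({i, nxt i} : Finset (Fin n)), w' j = ∑ j : Fin n, w' j :=
      Finset.sum_subset hpair (fun j _ hj => by
        simp only [Finset.mem_insert, Finset.mem_singleton] at hj
        push_neg at hj
        exact hw'zero j hj.1 hj.2)
    have e2 : ∑ j : Fin n, w' j = ∑ j ∈ ts, w j :=
      (Finset.sum_subset (Finset.subset_univ ts) (fun j _ hj => by simp [hw', hj])).symm.trans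
        (by apply Finset.sum_congr rfl; intro j hj; simp [hw', hj])
    rw [Finset.sum_pair hine] at e1
    rw [e1, e2, hw1]
  have hsum2 : w' i • V i + w' (nxt i) • V (nxt i) = x := by
    have e1 : ∑ j ∈ ({i, nxt i} : Finset (Fin n)), w' j • V j = ∑ j : Fin n, w' j • V j :=
      Finset.sum_subset hpair (fun j _ hj => by
        simp only [Finset.mem_insert, Finset.mem_singleton] at hj
        push_neg at hj
        rw [hw'zero j hj.1 hj.2, zero_smul])
    have e2 : ∑ j : Fin n, w' j • V j = ∑ j ∈ ts, w j • V j :=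
      (Finset.sum_subset (Finset.subset_univ ts) (fun j _ hj => by simp [hw', hj])).symm.trans
        (by apply Finset.sum_congr rfl; intro j hj; simp [hw', hj])
    rw [Finset.sum_pair hine] at e1
    rw [e1, e2, hxx]
  have hnn1 : 0 ≤ w' i := by
    by_cases h : i ∈ ts
    · simp only [hw', if_pos h]; exact hw0 i h
    · simp [hw', h]
  have hnn2 : 0 ≤ w' (nxt i) := by
    by_cases h : nxt i ∈ ts
    · simp only [hw', if_pos h]; exact hw0 _ h
    · simp [hw', h]
  exact ⟨w' i, w' (nxt i), hnn1, hnn2, hsum1, hsum2⟩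

end Core

lemma claimA {n : ℕ} {V : Fin n → ℝ × ℝ} {s : ℝ} (hn : 3 ≤ n) (hs : s ≠ 0)
    (Hpos : ∀ i j : Fin n, j ≠ i → j ≠ nxt i → 0 < s * det3 (V i) (V (nxt i)) (V j))
    {y : ℝ × ℝ} (hy : ∀ i : Fin n, 0 ≤ s * det3 (V i) (V (nxt i)) y) :
    y ∈ convexHull ℝ (Set.range V) := by
  classical
  have h0n : (0 : ℕ) < n := by omega
  set i0 : Fin n := ⟨0, h0n⟩ with hi0
  set P : ℕ → Prop := fun k => 1 ≤ k ∧ ∃ hk : k < n, 0 ≤ s * det3 (V i0) (V ⟨k, hk⟩) y with hP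
  have hP1 : P 1 := by
    refine ⟨le_refl 1, by omega, ?_⟩
    have h1 : (⟨1, by omega⟩ : Fin n) = nxt i0 := by
      apply Fin.ext; simp [nxt_val, hi0, Nat.mod_eq_of_lt (by omega : (1:ℕ) < n)]
    rw [h1]; exact hy i0
  set i := Nat.findGreatest P (n - 2) with hi
  have hi1 : 1 ≤ i := Nat.le_findGreatest (by omega) hP1
  have hi2 : i ≤ n - 2 := Nat.findGreatest_le _
  have hPi : P i := Nat.findGreatest_spec (m := 1) (by omega) hP1
  obtain ⟨-, hki, hge⟩ := hPi
  have hki1 : i + 1 < n := by omega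
  set A := V i0 with hA
  set B := V ⟨i, hki⟩ with hB
  set C := V ⟨i + 1, hki1⟩ with hC
  have hBC : nxt ⟨i, hki⟩ = ⟨i + 1, hki1⟩ := by
    apply Fin.ext; simp [nxt_val, Nat.mod_eq_of_lt hki1]
  -- y is on the correct side of B C
  have h1 : 0 ≤ s * det3 B C y := by
    have := hy ⟨i, hki⟩
    rwa [hBC] at this
  -- y is on the other side of A C
  have h2 : s * det3 A C y ≤ 0 := by
    rcases lt_or_ge i (n - 2) with hlt | hge2
    · by_contra hcon
      push_neg at hcon
      exact Nat.findGreatest_is_greatest (by omega : i < i + 1) (by omega : i + 1 ≤ n - 2)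
        ⟨by omega, hki1, hcon.le⟩
    · have hieq : i + 1 = n - 1 := by omega
      have hlast : nxt ⟨i + 1, hki1⟩ = i0 := by
        apply Fin.ext
        simp only [nxt_val, hi0]
        rw [hieq]
        rw [(by omega : n - 1 + 1 = n), Nat.mod_self]
      have := hy ⟨i + 1, hki1⟩
      rw [hlast] at this
      rw [det3_swap12] at this
      linarith
  -- positive triangle
  have hD : 0 < s * det3 A B C := by
    have := Hpos ⟨i, hki⟩ i0
      (by simp only [hi0, ne_eq, Fin.mk.injEq]; omega)
      (by rw [hBC]; simp only [hi0, ne_eq, Fin.mk.injEq]; omega)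
    rw [hBC] at this
    rwa [det3_cyc] at this
  -- barycentric weights
  set cA := s * det3 y B C with hcA
  set cB := s * det3 A y C with hcB
  set cC := s * det3 A B y with hcC
  have hcA0 : 0 ≤ cA := by rw [hcA, ← det3_cyc]; exact h1
  have hcB0 : 0 ≤ cB := by
    rw [hcB]
    have : det3 A y C = - det3 A C y := by rw [det3_swap23]
    rw [this]; nlinarith
  have hcC0 : 0 ≤ cC := hge
  have hsum : cA + cB + cC = s * det3 A B C := by
    rw [hcA, hcB, hcC, ← mul_add, ← mul_add, cramer_sum]
  have hvec : (s * det3 A B C) • y = cA • A + cB • B + cC • C := by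
    have := cramer_vec A B C y
    calc (s * det3 A B C) • y = s • ((det3 A B C) • y) := by rw [smul_smul]
      _ = s • ((det3 y B C) • A + (det3 A y C) • B + (det3 A B y) • C) := by rw [this]
      _ = cA • A + cB • B + cC • C := by
          simp only [smul_add, smul_smul, hcA, hcB, hcC]
  -- center of mass
  set wt : Fin 3 → ℝ := ![cA, cB, cC] with hwt
  set zt : Fin 3 → ℝ × ℝ := ![A, B, C] with hzt
  have hw0 : ∀ j ∈ Finset.univ, 0 ≤ wt j := by
    intro j _
    fin_cases j <;> simp [hwt, hcA0, hcB0, hcC0]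
  have hws : 0 < ∑ j ∈ Finset.univ, wt j := by
    rw [hwt]
    simp [Fin.sum_univ_three]
    linarith [hsum, hD]
  have hz : ∀ j ∈ Finset.univ, zt j ∈ Set.range V := by
    intro j _
    fin_cases j <;> simp [hzt, hA, hB, hC] <;> exact ⟨_, rfl⟩
  have hmem := Finset.univ.centerMass_mem_convexHull hw0 hws hz
  have heq : Finset.univ.centerMass wt zt = y := by
    rw [Finset.centerMass]
    have hsw : ∑ j ∈ Finset.univ, wt j = s * det3 A B C := by
      rw [hwt]; simp [Fin.sum_univ_three]; linarith [hsum]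
    have hsz : ∑ j ∈ Finset.univ, wt j • zt j = cA • A + cB • B + cC • C := by
      rw [hwt, hzt]; simp [Fin.sum_univ_three]
    rw [hsw, hsz, ← hvec, smul_smul, inv_mul_cancel₀ (ne_of_gt hD), one_smul]
  rwa [heq] at hmem

lemma dot2_sub_right (g a b : ℝ × ℝ) : dot2 g (a - b) = dot2 g a - dot2 g b := by
  simp [dot2]; ring

lemma det3_sub (P Q x w : ℝ × ℝ) :
    det3 P Q (x - w) = det3 P Q x - dot2 (rot (Q - P)) w := by
  simp [det3_eq, dot2, rot]; ring

lemma det3_zero_on_segment {P Q x : ℝ × ℝ} (hx : x ∈ segment ℝ P Q) : det3 P Q x = 0 := by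
  obtain ⟨a, b, _, _, hab, hx⟩ := hx
  rw [← hx, det3_combo2 hab, det3_self_left, det3_self_right]
  ring

lemma quasi_of_strict {n : ℕ} {V : Fin n → ℝ × ℝ} (hn : 3 ≤ n)
    (hS : StrictlyToOneSide V) : QuasiStrict V := by
  intro i j hj1 hj2 hcol
  obtain ⟨nv, hnv, hperp, hpos⟩ := hS i
  have hp := hpos (V j) ⟨j, hj1, hj2, rfl⟩
  obtain ⟨v, hv⟩ := (collinear_iff_of_mem (Set.mem_insert (V i) _)).1 hcol
  obtain ⟨t1, ht1⟩ := hv (V (nxt i)) (by simp)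
  obtain ⟨t2, ht2⟩ := hv (V j) (by simp)
  have e1 : dot2 nv (V (nxt i) - V i) = t1 * dot2 nv v := by
    rw [ht1]; simp [dot2]; ring
  have e2 : dot2 nv (V j - V i) = t2 * dot2 nv v := by
    rw [ht2]; simp [dot2]; ring
  rw [e1] at hperp
  rw [e2] at hp
  have hvne : dot2 nv v ≠ 0 := by
    intro h; rw [h, mul_zero] at hp; exact lt_irrefl _ hp
  have ht10 : t1 = 0 := by
    rcases mul_eq_zero.1 hperp with h | h
    · exact h
    · exact absurd h hvne
  simp only [ht10, zero_smul, zero_vadd, zero_add] at ht1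
  exact adj_ne hn hS i ht1.symm

lemma backward_main {n : ℕ} {V : Fin n → ℝ × ℝ} (hn : 3 ≤ n)
    (hS : StrictlyToOneSide V) : IsConvexPolygon V := by
  obtain ⟨s, hs, Hpos⟩ := exists_sign hn hS
  set K := convexHull ℝ (Set.range V) with hK
  have hKconv : Convex ℝ K := convex_convexHull ℝ _
  have hKclosed : IsClosed K := ((Set.finite_range V).isCompact_convexHull ℝ).isClosed
  apply Set.Subset.antisymm
  · -- edges lie on the frontier
    rintro x hx
    simp only [Set.mem_iUnion] at hx
    obtain ⟨i, hxi⟩ := hx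
    have hPK : V i ∈ K := subset_convexHull ℝ _ ⟨i, rfl⟩
    have hQK : V (nxt i) ∈ K := subset_convexHull ℝ _ ⟨nxt i, rfl⟩
    have hxK : x ∈ K := hKconv.segment_subset hPK hQK hxi
    constructor
    · exact subset_closure hxK
    · -- not in the interior
      intro hint
      rw [mem_interior_iff_mem_nhds, Metric.mem_nhds_iff] at hint
      obtain ⟨ε, hε, hball⟩ := hint
      set d := V (nxt i) - V i with hd
      have hdne : d ≠ 0 := sub_ne_zero.2 (Ne.symm (adj_ne hn hS i))
      set u := rot d with hu
      have hune : u ≠ 0 := rot_ne_zero hdne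
      have hupos : 0 < ‖u‖ := norm_pos_iff.2 hune
      set c : ℝ := ε / (2 * (|s| * ‖u‖ + 1)) with hc
      have hcpos : 0 < c := by positivity
      set z := x - (c * s) • u with hz
      have hzball : z ∈ Metric.ball x ε := by
        rw [Metric.mem_ball, hz, dist_eq_norm]
        simp only [sub_sub_cancel_left, norm_neg, norm_smul]
        rw [Real.norm_eq_abs, abs_mul, abs_of_pos hcpos]
        calc c * |s| * ‖u‖ ≤ c * (|s| * ‖u‖ + 1) := by nlinarith
          _ = ε / 2 := by rw [hc]; field_simp
          _ < ε := by linarith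
      have hzK : z ∈ K := hball hzball
      have hzhalf := hull_subset_halfspace Hpos i hzK
      simp only [Set.mem_setOf_eq] at hzhalf
      have hdet0 : det3 (V i) (V (nxt i)) x = 0 := det3_zero_on_segment hxi
      have : det3 (V i) (V (nxt i)) z
          = det3 (V i) (V (nxt i)) x - dot2 u ((c * s) • u) := by
        rw [hz, det3_sub, hu, hd]
      rw [this, hdet0, zero_sub] at hzhalf
      rw [dot2_comm, dot2_smul] at hzhalf
      rw [hu, dot2_rot_self] at hzhalf
      have hdd : 0 < d.1 ^ 2 + d.2 ^ 2 := by
        have : d.1 ≠ 0 ∨ d.2 ≠ 0 := by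
          by_contra hcon; push_neg at hcon; exact hdne (Prod.ext hcon.1 hcon.2)
        rcases this with h | h <;> positivity
      nlinarith [sq_nonneg s, mul_pos hcpos hdd, sq_pos_of_ne_zero hs]
  · -- the frontier is covered by the edges
    intro x hx
    have hxK : x ∈ K := by
      have := frontier_subset_closure (s := K) hx
      rwa [hKclosed.closure_eq] at this
    by_contra hnot
    simp only [Set.mem_iUnion] at hnot
    push_neg at hnot
    have hstrict : ∀ i : Fin n, 0 < s * det3 (V i) (V (nxt i)) x := by
      intro i
      have hge := hull_subset_halfspace Hpos i hxK
      simp only [Set.mem_setOf_eq] at hge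
      rcases hge.lt_or_eq with h | h
      · exact h
      · exact absurd (face_eq_segment hn Hpos i hxK h.symm) (hnot i)
    have hint : x ∈ interior K := by
      rw [mem_interior]
      refine ⟨⋂ i : Fin n, {y : ℝ × ℝ | 0 < s * det3 (V i) (V (nxt i)) y}, ?_, ?_, ?_⟩
      · intro y hy
        exact claimA hn hs Hpos (fun i => (Set.mem_iInter.1 hy i).le)
      · exact isOpen_iInter_of_finite fun i =>
          isOpen_lt continuous_const (continuous_const.mul (det3_continuous _ _))
      · exact Set.mem_iInter.2 hstrict
    exact hx.2 hint

lemma forward_main {n : ℕ} {V : Fin n → ℝ × ℝ} (hn : 3 ≤ n)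
    (h1 : IsConvexPolygon V) (h2 : QuasiStrict V) : StrictlyToOneSide V := by
  intro i
  set K := convexHull ℝ (Set.range V) with hK
  have hKconv : Convex ℝ K := convex_convexHull ℝ _
  set P := V i with hP
  set Q := V (nxt i) with hQ
  set j0 := nxt (nxt i) with hj0
  have hj01 : j0 ≠ i := nxt_nxt_ne hn i
  have hj02 : j0 ≠ nxt i := nxt_ne (by omega) (nxt i)
  have hncol : ¬ Collinear ℝ ({P, Q, V j0} : Set (ℝ × ℝ)) := h2 i j0 hj01 hj02
  -- the hull has nonempty interior
  have hfinrank : Module.finrank ℝ (ℝ × ℝ) = 2 := by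
    simp [Module.finrank_prod]
  have haffind : AffineIndependent ℝ ![P, Q, V j0] :=
    affineIndependent_iff_not_collinear_set.2 hncol
  have hspan3 : affineSpan ℝ (Set.range ![P, Q, V j0]) = ⊤ := by
    rw [haffind.affineSpan_eq_top_iff_card_eq_finrank_add_one, hfinrank]
    simp
  have hspan : affineSpan ℝ (Set.range V) = ⊤ := by
    apply top_unique
    rw [← hspan3]
    apply affineSpan_mono
    rintro _ ⟨k, rfl⟩
    fin_cases k
    · exact ⟨i, rfl⟩
    · exact ⟨nxt i, rfl⟩
    · exact ⟨j0, rfl⟩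
  have hint : (interior K).Nonempty := by
    rw [hKconv.interior_nonempty_iff_affineSpan_eq_top, affineSpan_convexHull]
    exact hspan
  -- the midpoint of the edge is on the frontier
  set x := midpoint ℝ P Q with hx
  have hxseg : x ∈ segment ℝ P Q := midpoint_mem_segment P Q
  have hxfr : x ∈ frontier K := by
    rw [← h1]
    exact Set.mem_iUnion.2 ⟨i, hxseg⟩
  have hxint : x ∉ interior K := hxfr.2
  -- separating functional
  obtain ⟨f, hf⟩ := geometric_hahn_banach_open_point hKconv.interior isOpen_interior hxint
  -- f is bounded by f x on K
  have hKle : ∀ a ∈ K, f a ≤ f x := by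
    intro a ha
    by_contra hgt
    push_neg at hgt
    obtain ⟨w, hw⟩ := hint
    have hfw : f w < f x := hf w hw
    set t : ℝ := (f x - f w) / (f a - f w) with ht
    have hfa : f w < f a := lt_trans hfw hgt
    have ht1 : t < 1 := by
      rw [ht, div_lt_one (by linarith)]; linarith
    have ht0 : 0 < t := by
      rw [ht]; apply div_pos <;> linarith
    set t' : ℝ := (t + 1) / 2 with ht'
    have htt' : t < t' := by rw [ht']; linarith
    have ht'1 : t' < 1 := by rw [ht']; linarith
    have ht'0 : 0 < t' := by rw [ht']; linarith
    have hz : (1 - t') • w + t' • a ∈ interior K :=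
      hKconv.combo_interior_closure_mem_interior hw (subset_closure ha)
        (by linarith) (by linarith) (by ring)
    have hfz := hf _ hz
    rw [map_add, map_smul, map_smul] at hfz
    simp only [smul_eq_mul] at hfz
    have : f x - f w < t' * (f a - f w) := by
      calc f x - f w = t * (f a - f w) := by
            rw [ht, div_mul_cancel₀]
            linarith
        _ < t' * (f a - f w) := by nlinarith
    nlinarith
  -- represent f by a vector
  set g : ℝ × ℝ := (f (1, 0), f (0, 1)) with hg
  have hfg : ∀ v : ℝ × ℝ, f v = dot2 g v := by
    intro v
    have hv : v = v.1 • ((1:ℝ), (0:ℝ)) + v.2 • ((0:ℝ), (1:ℝ)) := by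
      apply Prod.ext <;> simp
    rw [hv, map_add, map_smul, map_smul]
    simp [dot2, hg]
    ring
  have hgne : g ≠ 0 := by
    intro h0
    obtain ⟨w, hw⟩ := hint
    have h1' := hf w hw
    rw [hfg w, hfg x, h0] at h1'
    simp [dot2] at h1'
  -- f P = f Q = f x
  have hPK : P ∈ K := subset_convexHull ℝ _ ⟨i, rfl⟩
  have hQK : Q ∈ K := subset_convexHull ℝ _ ⟨nxt i, rfl⟩
  have hfxPQ : f x = (f P + f Q) / 2 := by
    rw [hx, midpoint_eq_smul_add, map_smul]
    simp [map_add]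
    ring
  have hfP : f P = f x := by
    have h1' := hKle P hPK
    have h2' := hKle Q hQK
    linarith [hfxPQ]
  have hfQ : f Q = f x := by
    have h1' := hKle P hPK
    have h2' := hKle Q hQK
    linarith [hfxPQ]
  -- strict inequality for all other vertices
  refine ⟨-g, neg_ne_zero.2 hgne, ?_, ?_⟩
  · have : dot2 g (Q - P) = f Q - f P := by
      rw [dot2_sub_right, hfg, hfg]
    have hneg : dot2 (-g) (Q - P) = -(dot2 g (Q - P)) := by simp [dot2]; ring
    rw [hneg, this, hfP, hfQ]; ring
  · rintro _ ⟨j, hj1, hj2, rfl⟩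
    have hfj : f (V j) ≤ f x := hKle _ (subset_convexHull ℝ _ ⟨j, rfl⟩)
    have hlt : f (V j) < f x := by
      rcases hfj.lt_or_eq with h | h
      · exact h
      · -- V j on the supporting line: collinearity contradiction
        exfalso
        apply h2 i j hj1 hj2
        rw [collinear_iff_of_mem (Set.mem_insert P _)]
        refine ⟨rot g, ?_⟩
        have hrep : ∀ p : ℝ × ℝ, f p = f x → ∃ r : ℝ, p = r • rot g + P := by
          intro p hp
          have hperp : dot2 g (p - P) = 0 := by
            rw [dot2_sub_right, ← hfg, ← hfg, hp, hfP]; ring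
          obtain ⟨r, hr⟩ := perp_rep hgne hperp
          exact ⟨r, by rw [← hr]; abel⟩
        rintro p hp
        simp only [Set.mem_insert_iff, Set.mem_singleton_iff] at hp
        rcases hp with rfl | rfl | rfl
        · exact hrep _ hfP
        · exact hrep _ hfQ
        · exact hrep _ h
    have : dot2 (-g) (V j - P) = -(f (V j) - f P) := by
      rw [hfg (V j), hfg P] at *
      simp [dot2] at *
      ring
    rw [this, hfP]
    linarith

/-- Pinelis, Lemma 2: an n-gon with n ≥ 3 is quasi-strictly convex iff it is
strictly to-one-side. -/
theorem stmt_13 (n : ℕ) (hn : 3 ≤ n) (V : Fin n → ℝ × ℝ) :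
    (IsConvexPolygon V ∧ QuasiStrict V) ↔ StrictlyToOneSide V := by
  constructor
  · rintro ⟨h1, h2⟩
    exact forward_main hn h1 h2
  · intro hS
    exact ⟨backward_main hn hS, quasi_of_strict hn hS⟩
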